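/- Let p > 0, b > 0, λ ∈ ℝ, and let w > 1. Then the Laplace transform ∫_0^∞ e^{−wt} t^{b−1} E^λ_{p,b}(−t^p) dt converges and equals w^{pλ−b} (1+w^p)^{−λ}, which also equals w^{−b} (1 + w^{−p})^{−λ}. -/

import Mathlib

open MeasureTheory

section Helpers
open Set Filter Polynomial


lemma abs_ascPochhammer_le (lam : ℝ) (n : ℕ) :
    |(ascPochhammer ℝ n).eval lam| ≤ (ascPochhammer ℝ n).eval ((⌈|lam|⌉₊ + 1 : ℕ) : ℝ) := by
  induction n with
  | zero => simp
  | succ n ih =>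
    rw [ascPochhammer_succ_eval, ascPochhammer_succ_eval, abs_mul]
    have h1 : |lam + n| ≤ ((⌈|lam|⌉₊ + 1 : ℕ) : ℝ) + n := by
      refine (abs_add_le _ _).trans ?_
      have h := Nat.le_ceil |lam|
      have : |(n:ℝ)| = (n:ℝ) := abs_of_nonneg (Nat.cast_nonneg n)
      rw [this]
      push_cast
      linarith
    refine mul_le_mul ih h1 (abs_nonneg _) ?_
    rw [← Nat.cast_ascFactorial]
    positivity

lemma ascPochhammer_nat_real_eq (M n : ℕ) :
    (ascPochhammer ℝ n).eval ((M + 1 : ℕ) : ℝ) = ((Nat.factorial n) : ℝ) * ((M + n).choose n) := by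
  rw [← Nat.cast_ascFactorial, Nat.ascFactorial_eq_factorial_mul_choose]
  push_cast; ring

lemma summable_asc_mul_geom (lam : ℝ) {x : ℝ} (hx : |x| < 1) :
    Summable (fun n : ℕ => ((n : ℝ) + 1) * (|(ascPochhammer ℝ n).eval lam| / (Nat.factorial n)) * |x| ^ n) := by
  set M := ⌈|lam|⌉₊ with hM
  have hsum : Summable (fun n : ℕ => ((M + 1 : ℝ)) * (((n + (M + 1)).choose (M + 1) : ℝ) * |x| ^ n)) := by
    apply Summable.mul_left
    exact summable_choose_mul_geometric_of_norm_lt_one (M + 1) (by simpa using hx)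
  refine hsum.of_nonneg_of_le (fun n => by positivity) (fun n => ?_)
  have h1 : |(ascPochhammer ℝ n).eval lam| / (Nat.factorial n) ≤ ((M + n).choose n : ℝ) := by
    rw [div_le_iff₀ (by positivity)]
    calc |(ascPochhammer ℝ n).eval lam| ≤ (ascPochhammer ℝ n).eval ((M + 1 : ℕ) : ℝ) :=
          abs_ascPochhammer_le lam n
      _ = ((Nat.factorial n) : ℝ) * ((M + n).choose n) := ascPochhammer_nat_real_eq M n
      _ = ((M + n).choose n : ℝ) * (Nat.factorial n) := by ring
  have h2 : ((n : ℝ) + 1) * ((M + n).choose n : ℝ) ≤ (M + 1 : ℝ) * ((n + (M + 1)).choose (M + 1) : ℝ) := by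
    have key : (n + M + 1) * ((n + M).choose M) = (n + M + 1).choose (M + 1) * (M + 1) := by
      simpa using Nat.add_one_mul_choose_eq (n + M) M
    have hsymm : (M + n).choose n = (n + M).choose M := by
      rw [Nat.add_comm M n]; exact Nat.choose_symm_add
    have : (n + 1) * ((M + n).choose n) ≤ (M + 1) * ((n + (M + 1)).choose (M + 1)) := by
      rw [hsymm]
      calc (n + 1) * ((n + M).choose M) ≤ (n + M + 1) * ((n + M).choose M) := by
            apply Nat.mul_le_mul_right; omega
        _ = (M + 1) * ((n + (M + 1)).choose (M + 1)) := by
            rw [key, Nat.mul_comm]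
            congr 2
    exact_mod_cast this
  calc ((n : ℝ) + 1) * (|(ascPochhammer ℝ n).eval lam| / (Nat.factorial n)) * |x| ^ n
      ≤ ((n : ℝ) + 1) * ((M + n).choose n : ℝ) * |x| ^ n := by
        apply mul_le_mul_of_nonneg_right _ (by positivity)
        exact mul_le_mul_of_nonneg_left h1 (by positivity)
    _ ≤ (M + 1 : ℝ) * (((n + (M + 1)).choose (M + 1) : ℝ)) * |x| ^ n := by
        apply mul_le_mul_of_nonneg_right h2 (by positivity)
    _ = _ := by ring

lemma summable_asc_mul_geom' (lam : ℝ) {x : ℝ} (hx : |x| < 1) :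
    Summable (fun n : ℕ => |(ascPochhammer ℝ n).eval lam| / (Nat.factorial n) * |x| ^ n) := by
  refine (summable_asc_mul_geom lam hx).of_nonneg_of_le (fun n => by positivity) (fun n => ?_)
  have h1 : (1 : ℝ) ≤ (n : ℝ) + 1 := by
    have := Nat.cast_nonneg (α := ℝ) n; linarith
  nlinarith [abs_nonneg ((ascPochhammer ℝ n).eval lam), pow_nonneg (abs_nonneg x) n,
    div_nonneg (abs_nonneg ((ascPochhammer ℝ n).eval lam)) (Nat.cast_nonneg (Nat.factorial n)),
    mul_nonneg (div_nonneg (abs_nonneg ((ascPochhammer ℝ n).eval lam)) (Nat.cast_nonneg (Nat.factorial n))) (pow_nonneg (abs_nonneg x) n)]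

lemma hasSum_ascPochhammer_div (lam : ℝ) {x : ℝ} (hx : |x| < 1) :
    HasSum (fun n : ℕ => (ascPochhammer ℝ n).eval lam / (Nat.factorial n) * x ^ n)
      ((1 - x) ^ (-lam)) := by
  set c : ℕ → ℝ := fun n => (ascPochhammer ℝ n).eval lam / (Nat.factorial n) with hc
  set r : ℝ := (1 + |x|) / 2 with hrdef
  have hr0 : 0 < r := by positivity
  have hxr : |x| < r := by rw [hrdef]; linarith [abs_nonneg x]
  have hr1 : r < 1 := by rw [hrdef]; linarith
  have habsr : |r| = r := abs_of_pos hr0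
  have hu : Summable (fun n : ℕ =>
      ((n:ℝ)+1) * (|(ascPochhammer ℝ n).eval lam| / (Nat.factorial n)) * r ^ n / r) := by
    have := (summable_asc_mul_geom lam (x := r) (by rwa [habsr])).div_const r
    simpa [habsr] using this
  set u : ℕ → ℝ := fun n =>
    ((n:ℝ)+1) * (|(ascPochhammer ℝ n).eval lam| / (Nat.factorial n)) * r ^ n / r with hudef
  set t : Set ℝ := Ioo (-r) r with htdef
  have hmemt : ∀ y : ℝ, |y| < r → y ∈ t := fun y hy => by
    rw [htdef]; constructor
    · linarith [neg_abs_le y]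
    · linarith [le_abs_self y]
  have hxt : x ∈ t := hmemt x hxr
  have h0t : (0:ℝ) ∈ t := hmemt 0 (by simpa using hr0)
  set g : ℕ → ℝ → ℝ := fun n y => c n * y ^ n with hgdef
  set g' : ℕ → ℝ → ℝ := fun n y => c n * ((n:ℝ) * y ^ (n - 1)) with hg'def
  have habsc : ∀ n, |c n| = |(ascPochhammer ℝ n).eval lam| / (Nat.factorial n) := by
    intro n; rw [hc]; rw [abs_div, Nat.abs_cast]
  have hgderiv : ∀ n y, y ∈ t → HasDerivAt (g n) (g' n y) y := fun n y _ =>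
    (hasDerivAt_pow n y).const_mul (c n)
  have hg'bound : ∀ n y, y ∈ t → ‖g' n y‖ ≤ u n := by
    intro n y hy
    have hyr : |y| ≤ r := by
      rw [htdef] at hy; rw [abs_le]; exact ⟨hy.1.le, hy.2.le⟩
    have KI : (n:ℝ) * |y| ^ (n - 1) ≤ ((n:ℝ)+1) * r ^ n / r := by
      match n with
      | 0 => simp; positivity
      | (m+1) =>
        have hpow : r ^ (m+1) / r = r ^ m := by
          rw [pow_succ, mul_div_assoc, div_self hr0.ne', mul_one]
        rw [Nat.add_sub_cancel, mul_div_assoc, hpow]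
        push_cast
        have h1 : |y| ^ m ≤ r ^ m := pow_le_pow_left₀ (abs_nonneg y) hyr m
        have h2 : (0:ℝ) ≤ r ^ m := by positivity
        nlinarith [Nat.cast_nonneg (α := ℝ) m]
    calc ‖g' n y‖ = |c n| * ((n:ℝ) * |y| ^ (n-1)) := by
          rw [hg'def]; simp only [Real.norm_eq_abs, abs_mul, abs_pow, Nat.abs_cast]
      _ ≤ |c n| * (((n:ℝ)+1) * r ^ n / r) :=
          mul_le_mul_of_nonneg_left KI (abs_nonneg _)
      _ = u n := by rw [hudef, habsc]; ring
  have hg0 : Summable (fun n => g n 0) := by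
    apply summable_of_ne_finset_zero (s := {0})
    intro n hn
    simp only [Finset.mem_singleton] at hn
    simp [hgdef, zero_pow hn]
  set f : ℝ → ℝ := fun z => ∑' n, g n z with hfdef
  have key : ∀ y ∈ t, HasDerivAt f (∑' n, g' n y) y := fun y hy =>
    hasDerivAt_tsum_of_isPreconnected hu isOpen_Ioo (convex_Ioo _ _).isPreconnected
      hgderiv hg'bound h0t hg0 hy
  have hsumg : ∀ y, |y| ≤ r → Summable (fun n => g n y) := by
    intro y hyr
    refine Summable.of_norm_bounded
      ((summable_asc_mul_geom' lam (x := r) (by rwa [habsr])).congr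
        (fun n => by rw [habsr])) ?_
    intro n
    calc ‖g n y‖ = |c n| * |y| ^ n := by
          rw [hgdef]; simp only [Real.norm_eq_abs, abs_mul, abs_pow]
      _ ≤ (|(ascPochhammer ℝ n).eval lam| / (Nat.factorial n)) * r ^ n := by
          rw [habsc]
          gcongr
  have hsumg' : ∀ y ∈ t, Summable (fun n => g' n y) := fun y hy =>
    Summable.of_norm_bounded hu (fun n => hg'bound n y hy)
  have hode : ∀ y ∈ t, (1 - y) * (∑' n, g' n y) = lam * f y := by
    intro y hy
    have hyr : |y| ≤ r := by
      rw [htdef] at hy; rw [abs_le]; exact ⟨hy.1.le, hy.2.le⟩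
    have hS : HasSum (fun n => g' n y) (∑' n, g' n y) := (hsumg' y hy).hasSum
    have hf : HasSum (fun n => g n y) (f y) := (hsumg y hyr).hasSum
    have hshift : HasSum (fun n => g' (n+1) y) (∑' n, g' n y) := by
      have h0 : g' 0 y = 0 := by simp [hg'def]
      have h2 := (hasSum_nat_add_iff' 1).mpr hS
      simpa [h0] using h2
    have hterm : ∀ n : ℕ, g' (n+1) y = lam * g n y + y * g' n y := by
      intro n
      have hc1 : c (n+1) * ((n:ℝ)+1) = (lam + n) * c n := by
        rw [hc]
        simp only
        rw [ascPochhammer_succ_eval, Nat.factorial_succ]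
        have hfn : (Nat.factorial n : ℝ) ≠ 0 := Nat.cast_ne_zero.mpr (Nat.factorial_ne_zero n)
        push_cast
        field_simp
      have hyn : ∀ m : ℕ, (m:ℝ) * y ^ m = y * ((m:ℝ) * y ^ (m-1)) := by
        intro m
        match m with
        | 0 => simp
        | (k+1) => rw [Nat.add_sub_cancel, pow_succ]; ring
      rw [hg'def, hgdef]
      simp only [Nat.add_sub_cancel]
      calc c (n+1) * ((((n:ℕ)+1 : ℕ)) * y ^ n) = (c (n+1) * ((n:ℝ)+1)) * y ^ n := by push_cast; ring
        _ = ((lam + n) * c n) * y ^ n := by rw [hc1]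
        _ = lam * (c n * y ^ n) + c n * ((n:ℝ) * y ^ n) := by ring
        _ = lam * (c n * y ^ n) + y * (c n * ((n:ℝ) * y ^ (n-1))) := by
            rw [hyn n]; ring
    have hRHS : HasSum (fun n => lam * g n y + y * g' n y) (lam * f y + y * ∑' n, g' n y) :=
      (hf.mul_left lam).add (hS.mul_left y)
    have := hshift.unique (by rw [funext hterm] at hshift ⊢; exact hRHS)
    linarith [this]
  have hphi : ∀ y ∈ t, HasDerivAt (fun z => f z * (1 - z) ^ lam) 0 y := by
    intro y hy
    have h1y : 0 < 1 - y := by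
      rw [htdef] at hy
      have := hy.2
      linarith
    have hd1 : HasDerivAt f (∑' n, g' n y) y := key y hy
    have base : HasDerivAt (fun z : ℝ => 1 - z) (-1) y := (hasDerivAt_id y).const_sub 1
    have hd2 : HasDerivAt (fun z => (1 - z) ^ lam) ((-1) * lam * (1 - y) ^ (lam - 1)) y :=
      base.rpow_const (Or.inl h1y.ne')
    have hmul := hd1.mul hd2
    have hode' := hode y hy
    have hxlam : (1 - y) ^ lam = (1 - y) * (1 - y) ^ (lam - 1) := by
      have h := Real.rpow_add h1y 1 (lam - 1)
      rw [show (1:ℝ) + (lam - 1) = lam by ring, Real.rpow_one] at h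
      exact h
    have hval : (∑' n, g' n y) * (1 - y) ^ lam + f y * ((-1) * lam * (1 - y) ^ (lam - 1)) = 0 := by
      rw [hxlam]
      have expand : (∑' n, g' n y) * ((1 - y) * (1 - y) ^ (lam - 1)) +
          f y * ((-1) * lam * (1 - y) ^ (lam - 1)) =
          ((1 - y) * (∑' n, g' n y) - lam * f y) * (1 - y) ^ (lam - 1) := by ring
      rw [expand, hode', sub_self, zero_mul]
    rw [← hval]
    exact hmul
  -- constancy on the segment from 0 to x
  have hphival : f x * (1 - x) ^ lam = f 0 * (1 - 0) ^ lam := by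
    rcases le_or_gt 0 x with h0x | hx0
    · have hsub : Icc (0:ℝ) x ⊆ t := by
        intro z hz
        apply hmemt
        rw [abs_of_nonneg hz.1]
        exact lt_of_le_of_lt hz.2 (lt_of_le_of_lt (le_abs_self x) hxr)
      have hcont : ContinuousOn (fun z => f z * (1 - z) ^ lam) (Icc 0 x) := fun z hz =>
        (hphi z (hsub hz)).continuousAt.continuousWithinAt
      have hderiv : ∀ z ∈ Ico (0:ℝ) x, HasDerivWithinAt (fun z => f z * (1 - z) ^ lam) 0 (Ici z) z :=
        fun z hz => (hphi z (hsub (Ico_subset_Icc_self hz))).hasDerivWithinAt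
      exact constant_of_has_deriv_right_zero hcont hderiv x (right_mem_Icc.mpr h0x)
    · have hsub : Icc x 0 ⊆ t := by
        intro z hz
        apply hmemt
        rw [abs_lt]
        rw [htdef] at hxt
        exact ⟨by linarith [hxt.1, hz.1], by linarith [hz.2, hr0]⟩
      have hcont : ContinuousOn (fun z => f z * (1 - z) ^ lam) (Icc x 0) := fun z hz =>
        (hphi z (hsub hz)).continuousAt.continuousWithinAt
      have hderiv : ∀ z ∈ Ico x 0, HasDerivWithinAt (fun z => f z * (1 - z) ^ lam) 0 (Ici z) z :=
        fun z hz => (hphi z (hsub (Ico_subset_Icc_self hz))).hasDerivWithinAt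
      exact (constant_of_has_deriv_right_zero hcont hderiv 0 (right_mem_Icc.mpr hx0.le)).symm
  have hf0 : f 0 = 1 := by
    rw [hfdef]
    simp only
    rw [tsum_eq_single 0 (fun n hn => by simp [hgdef, zero_pow hn])]
    simp [hgdef, hc]
  have h1x : 0 < 1 - x := by
    have := lt_of_le_of_lt (le_abs_self x) hx
    linarith
  have hfx : f x = (1 - x) ^ (-lam) := by
    have hne : (1 - x) ^ lam ≠ 0 := (Real.rpow_pos_of_pos h1x lam).ne'
    rw [Real.rpow_neg h1x.le, inv_eq_one_div, eq_div_iff hne]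
    rw [hphival, hf0, sub_zero, Real.one_rpow]
    norm_num
  have h2 : HasSum (fun n => g n x) (f x) := (hsumg x hxr.le).hasSum
  rw [hfx] at h2
  exact h2


lemma integrable_tsum_of_summable_integral_norm'
    {α : Type*} [MeasurableSpace α] {μ : Measure α} {F : ℕ → α → ℝ}
    (hF_int : ∀ i, Integrable (F i) μ)
    (hF_sum : Summable fun i => ∫ a, ‖F i a‖ ∂μ) :
    Integrable (fun a => ∑' i, F i a) μ := by
  have hf'' : ∀ i, AEMeasurable (fun x => (‖F i x‖₊ : ENNReal)) μ := fun i =>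
    (hF_int i).aestronglyMeasurable.enorm
  have heq : ∀ i, ∫⁻ a, (‖F i a‖₊ : ENNReal) ∂μ = ENNReal.ofReal (∫ a, ‖F i a‖ ∂μ) := fun i =>
    (ofReal_integral_norm_eq_lintegral_enorm (hF_int i)).symm
  have hf' : ∑' i, ∫⁻ a, (‖F i a‖₊ : ENNReal) ∂μ ≠ ⊤ := by
    rw [funext heq, ← ENNReal.ofReal_tsum_of_nonneg (fun i => integral_nonneg (fun a => norm_nonneg _)) hF_sum]
    exact ENNReal.ofReal_ne_top
  have hlt : ∫⁻ a, ∑' n, (‖F n a‖₊ : ENNReal) ∂μ ≠ ⊤ := by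
    rw [lintegral_tsum hf'']; exact hf'
  have hae : ∀ᵐ a ∂μ, Summable fun n => ‖F n a‖ := by
    filter_upwards [ae_lt_top' (AEMeasurable.ennreal_tsum hf'') hlt] with a ha
    have h1 : Summable fun n => ‖F n a‖₊ := ENNReal.tsum_coe_ne_top_iff_summable.mp ha.ne
    have := NNReal.summable_coe.mpr h1
    simpa [coe_nnnorm] using this
  constructor
  · refine aestronglyMeasurable_of_tendsto_ae atTop
      (f := fun n x => ∑ i ∈ Finset.range n, F i x) (fun n =>
        Finset.aestronglyMeasurable_fun_sum _ (fun i _ => (hF_int i).1)) ?_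
    filter_upwards [hae] with a ha
    exact ha.of_norm.hasSum.tendsto_sum_nat
  · rw [hasFiniteIntegral_iff_norm]
    calc ∫⁻ a, ENNReal.ofReal ‖∑' i, F i a‖ ∂μ
        ≤ ∫⁻ a, ∑' n, (‖F n a‖₊ : ENNReal) ∂μ := by
          apply lintegral_mono_ae
          filter_upwards [hae] with a ha
          calc ENNReal.ofReal ‖∑' i, F i a‖ ≤ ENNReal.ofReal (∑' i, ‖F i a‖) :=
                ENNReal.ofReal_le_ofReal (norm_tsum_le_tsum_norm ha)
            _ = ∑' i, ENNReal.ofReal ‖F i a‖ :=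
                ENNReal.ofReal_tsum_of_nonneg (fun i => norm_nonneg _) ha
            _ = ∑' i, (‖F i a‖₊ : ENNReal) := by
                congr 1; funext i; rw [ofReal_norm]; rfl
      _ < ⊤ := by rw [lintegral_tsum hf'']; exact hf'.lt_top

end Helpers


/-- The generalized Mittag-Leffler function
`E^λ_{p,b}(z) = Σ_{k=0}^∞ (λ)_k z^k / (Γ(pk+b) k!)`, where `(λ)_k` is the rising
factorial. -/
noncomputable def genMittagLeffler (p b lam z : ℝ) : ℝ :=
  ∑' k : ℕ, (ascPochhammer ℝ k).eval lam * z ^ k /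
    (Real.Gamma (p * k + b) * (Nat.factorial k : ℝ))

open Set Filter Polynomial in
/-- **Laplace transform of the generalized Mittag-Leffler function.**
For `p > 0`, `b > 0`, real `λ`, and `w > 1`, the Laplace transform
`∫_0^∞ e^(−wt) t^(b−1) E^λ_{p,b}(−t^p) dt` converges and equals
`w^(pλ−b) (1+w^p)^(−λ) = w^(−b) (1+w^(−p))^(−λ)`. -/
theorem genMittagLeffler_laplace (p b lam w : ℝ) (hp : 0 < p) (hb : 0 < b)
    (hw : 1 < w) :
    IntegrableOn
        (fun t => Real.exp (-w * t) * t ^ (b - 1) * genMittagLeffler p b lam (-(t ^ p)))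
        (Set.Ioi 0) ∧
      (∫ t in Set.Ioi (0 : ℝ),
          Real.exp (-w * t) * t ^ (b - 1) * genMittagLeffler p b lam (-(t ^ p)))
        = w ^ (p * lam - b) * (1 + w ^ p) ^ (-lam) ∧
      w ^ (p * lam - b) * (1 + w ^ p) ^ (-lam)
        = w ^ (-b) * (1 + w ^ (-p)) ^ (-lam) := by
  have hw0 : (0:ℝ) < w := lt_trans one_pos hw
  set q : ℝ := (1 / w) ^ p with hq
  have hq0 : 0 < q := Real.rpow_pos_of_pos (by positivity) p
  have hq1 : q < 1 := by
    apply Real.rpow_lt_one (by positivity) _ hp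
    rw [div_lt_one hw0]
    exact hw
  have hqw : q = w ^ (-p) := by
    rw [hq, one_div, Real.inv_rpow hw0.le, ← Real.rpow_neg hw0.le]
  set C : ℕ → ℝ := fun k =>
    (-1:ℝ)^k * (ascPochhammer ℝ k).eval lam / (Real.Gamma (p*k+b) * (Nat.factorial k)) with hC
  set G : ℕ → ℝ → ℝ := fun k t => t ^ ((p * k + b) - 1) * Real.exp (-(w * t)) with hG
  set F : ℕ → ℝ → ℝ := fun k t => Real.exp (-w * t) * t ^ (b - 1) *
      ((ascPochhammer ℝ k).eval lam * (-(t ^ p)) ^ k /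
        (Real.Gamma (p*(k:ℕ)+b) * (Nat.factorial k))) with hF
  have hsk : ∀ k:ℕ, 0 < p * k + b := fun k => by positivity
  have hΓpos : ∀ k:ℕ, 0 < Real.Gamma (p*k+b) := fun k => Real.Gamma_pos_of_pos (hsk k)
  have hGint : ∀ k, IntegrableOn (G k) (Set.Ioi 0) := by
    intro k
    have hgamma := Real.GammaIntegral_convergent (hsk k)
    refine Integrable.mono' hgamma ?_ ?_
    · apply Measurable.aestronglyMeasurable
      apply Measurable.mul
      · exact (measurable_id.pow measurable_const)
      · exact (measurable_id.const_mul w).neg.exp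
    · filter_upwards [ae_restrict_mem measurableSet_Ioi] with t ht
      have ht0 : 0 < t := ht
      have h1 : Real.exp (-(w*t)) ≤ Real.exp (-t) := by
        apply Real.exp_le_exp.mpr
        nlinarith
      calc ‖G k t‖ = t ^ ((p*k+b)-1) * Real.exp (-(w*t)) := by
            rw [hG]
            simp only [Real.norm_eq_abs, abs_mul, Real.abs_exp,
              abs_of_nonneg (Real.rpow_nonneg ht0.le _)]
        _ ≤ t ^ ((p*k+b)-1) * Real.exp (-t) :=
            mul_le_mul_of_nonneg_left h1 (Real.rpow_nonneg ht0.le _)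
        _ = Real.exp (-t) * t ^ ((p*k+b)-1) := by ring
  have hGval : ∀ k:ℕ, ∫ t in Ioi (0:ℝ), G k t = (1/w)^(p*k+b) * Real.Gamma (p*k+b) :=
    fun k => Real.integral_rpow_mul_exp_neg_mul_Ioi (hsk k) hw0
  have hFeqG : ∀ k:ℕ, Set.EqOn (F k) (fun t => C k * G k t) (Ioi 0) := by
    intro k t ht
    have ht0 : (0:ℝ) < t := ht
    have e1 : (-(t ^ p)) ^ k = (-1:ℝ)^k * (t^p)^k := by rw [neg_pow]
    have e2 : (t^p)^k = t^(p*k) := by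
      rw [← Real.rpow_natCast (t^p) k, ← Real.rpow_mul ht0.le]
    have e3 : t^((p*k+b)-1) = t^(b-1) * t^(p*(k:ℝ)) := by
      rw [← Real.rpow_add ht0]
      ring_nf
    simp only [hF, hG, hC]
    rw [e1, e2, e3, neg_mul]
    push_cast
    ring
  have hFint : ∀ k, IntegrableOn (F k) (Ioi 0) := fun k =>
    IntegrableOn.congr_fun ((hGint k).const_mul (C k))
      (fun t ht => (hFeqG k ht).symm) measurableSet_Ioi
  have hsplit : ∀ k:ℕ, (1/w : ℝ)^(p*k+b) = q^k * (1/w)^b := by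
    intro k
    rw [Real.rpow_add (by positivity), hq, ← Real.rpow_natCast ((1/w)^p) k,
      ← Real.rpow_mul (by positivity)]
  have hFval : ∀ k:ℕ, ∫ t in Ioi (0:ℝ), F k t
      = ((ascPochhammer ℝ k).eval lam / (Nat.factorial k)) * (-q)^k * ((1/w)^b) := by
    intro k
    rw [setIntegral_congr_fun measurableSet_Ioi (hFeqG k), integral_const_mul, hGval k,
      hsplit k, hC]
    have hne : Real.Gamma (p*k+b) ≠ 0 := (hΓpos k).ne'
    have hfk : (Nat.factorial k : ℝ) ≠ 0 := Nat.cast_ne_zero.mpr (Nat.factorial_ne_zero k)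
    rw [neg_pow q k]
    field_simp
  have hFnormval : ∀ k:ℕ, ∫ t in Ioi (0:ℝ), ‖F k t‖
      = (|(ascPochhammer ℝ k).eval lam| / (Nat.factorial k)) * q^k * ((1/w)^b) := by
    intro k
    have h1 : Set.EqOn (fun t => ‖F k t‖) (fun t => |C k| * G k t) (Ioi 0) := by
      intro t ht
      have ht0 : (0:ℝ) < t := ht
      have hGpos : 0 ≤ G k t := by
        rw [hG]
        positivity
      simp only
      rw [hFeqG k ht]
      simp only [Real.norm_eq_abs, abs_mul, abs_of_nonneg hGpos]
    rw [setIntegral_congr_fun measurableSet_Ioi h1, integral_const_mul, hGval k, hsplit k, hC]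
    have hne : Real.Gamma (p*k+b) ≠ 0 := (hΓpos k).ne'
    have hfk : (Nat.factorial k : ℝ) ≠ 0 := Nat.cast_ne_zero.mpr (Nat.factorial_ne_zero k)
    rw [abs_div, abs_mul, abs_pow, abs_neg, abs_one, one_pow, one_mul,
      abs_of_pos (mul_pos (hΓpos k) (by positivity : (0:ℝ) < (Nat.factorial k : ℝ)))]
    field_simp
  have hqabs : |q| = q := abs_of_pos hq0
  have hsum : Summable (fun k => ∫ t in Ioi (0:ℝ), ‖F k t‖) := by
    apply Summable.congr _ (fun k => (hFnormval k).symm)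
    exact (((summable_asc_mul_geom' lam (x := q) (by rw [hqabs]; exact hq1)).congr
      (fun n => by rw [hqabs])).mul_right ((1/w)^b))
  have hswap : ∑' k, ∫ t in Ioi (0:ℝ), F k t = ∫ t in Ioi (0:ℝ), ∑' k, F k t :=
    integral_tsum_of_summable_integral_norm hFint hsum
  have hintegrand : (fun t => Real.exp (-w * t) * t ^ (b - 1) * genMittagLeffler p b lam (-(t ^ p)))
      = fun t => ∑' k, F k t := by
    funext t
    rw [genMittagLeffler, ← tsum_mul_left]
  -- the binomial series value
  have hbin := hasSum_ascPochhammer_div lam (x := -q) (by rw [abs_neg, hqabs]; exact hq1)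
  rw [sub_neg_eq_add] at hbin
  have htsumval : ∑' k, ∫ t in Ioi (0:ℝ), F k t = (1 + q) ^ (-lam) * ((1/w)^b) := by
    rw [funext hFval]
    exact (hbin.mul_right ((1/w)^b)).tsum_eq
  -- the algebraic identity
  have h1q : 1 + q = w ^ (-p) * (1 + w ^ p) := by
    rw [hqw, mul_add, mul_one, ← Real.rpow_add hw0, neg_add_cancel, Real.rpow_zero]
    ring
  have heq3 : w ^ (p * lam - b) * (1 + w ^ p) ^ (-lam)
      = w ^ (-b) * (1 + w ^ (-p)) ^ (-lam) := by
    rw [show (1:ℝ) + w ^ (-p) = 1 + q by rw [hqw], h1q,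
      Real.mul_rpow (Real.rpow_nonneg hw0.le _) (by positivity),
      ← Real.rpow_mul hw0.le, show -p * -lam = p * lam from by ring,
      ← mul_assoc, ← Real.rpow_add hw0, show p * lam - b = -b + p * lam from by ring]
  have hWb : ((1:ℝ)/w)^b = w ^ (-b) := by
    rw [one_div, Real.inv_rpow hw0.le, ← Real.rpow_neg hw0.le]
  refine ⟨?_, ?_, heq3⟩
  · rw [hintegrand]
    exact integrable_tsum_of_summable_integral_norm' hFint hsum
  · rw [hintegrand, ← hswap, htsumval, heq3, hWb]
    rw [hqw]
    ring
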